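/- Let R be a subsuperring of a superring S, let v be a valuation on R with value group Γ_v, and let w be a valuation on S with value group Γ_w. Then the following are equivalent: (i) w is an extension of v to S, i.e., there is an order isomorphism h from Γ_v onto an ordered subgroup of Γ_w with w(x) = h(v(x)) for all x ∈ R (where h(∞) = ∞); (ii) A_v ⊆ A_w, 𝔭_v = A_v ∩ 𝔭_w, and the restriction of w to R is a valuation on R (i.e., w(R) ∖ {∞} is a subgroup of Γ_w); (iii) A_v ⊆ A_w, 𝔭_v = A_v ∩ 𝔭_w, and supp(v) ⊆ supp(w). -/

import Mathlib

universe u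

/-- A superring: a `ZMod 2`-graded ring `R = R₀ ⊕ R₁` which is supercommutative
(`R₀` is central and every odd element squares to zero). -/
structure IsSuperring {R : Type*} [Ring R] (𝒜 : ZMod 2 → AddSubgroup R) : Prop where
  one_mem : (1 : R) ∈ 𝒜 0
  mul_mem : ∀ {i j : ZMod 2} {x y : R}, x ∈ 𝒜 i → y ∈ 𝒜 j → x * y ∈ 𝒜 (i + j)
  decompose : ∀ x : R, ∃ x0 ∈ 𝒜 0, ∃ x1 ∈ 𝒜 1, x = x0 + x1
  unique_decomp : ∀ x0 ∈ 𝒜 0, ∀ x1 ∈ 𝒜 1, x0 + x1 = 0 → x0 = 0 ∧ x1 = 0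
  even_central : ∀ x ∈ 𝒜 0, ∀ y : R, x * y = y * x
  odd_sq : ∀ x ∈ 𝒜 1, x * x = 0

/-- A (Manis) valuation on a ring `R`: a surjective map `v : R → Γ ∪ {∞}`
(`∞ = ⊤` is absorbing and greater than every element of the totally ordered
abelian group `Γ`) with `v 0 = ∞`, `v 1 = 0`, `v (x*y) = v x + v y` and
`v (x+y) ≥ min (v x) (v y)`. -/
structure IsValuation {R : Type*} [Ring R] {Γ : Type*} [AddCommGroup Γ] [LinearOrder Γ] [IsOrderedAddMonoid Γ]
    (v : R → WithTop Γ) : Prop where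
  surjective : Function.Surjective v
  map_zero : v 0 = ⊤
  map_one : v 1 = 0
  map_mul : ∀ x y : R, v (x * y) = v x + v y
  min_le_add : ∀ x y : R, min (v x) (v y) ≤ v (x + y)

/-- `A_v = {x : v x ≥ 0}`. -/
def valRing {R : Type*} [Ring R] {Γ : Type*} [AddCommGroup Γ] [LinearOrder Γ] [IsOrderedAddMonoid Γ]
    (v : R → WithTop Γ) : Set R := {x : R | 0 ≤ v x}

/-- `𝔭_v = {x : v x > 0}`. -/
def valIdeal {R : Type*} [Ring R] {Γ : Type*} [AddCommGroup Γ] [LinearOrder Γ] [IsOrderedAddMonoid Γ]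
    (v : R → WithTop Γ) : Set R := {x : R | 0 < v x}

/-- `supp v = v⁻¹(∞)`. -/
def valSupp {R : Type*} [Ring R] {Γ : Type*} [AddCommGroup Γ] [LinearOrder Γ] [IsOrderedAddMonoid Γ]
    (v : R → WithTop Γ) : Set R := {x : R | v x = ⊤}


section Aux

variable {R S : Type u} [Ring R] [Ring S]
  {Γ : Type*} [AddCommGroup Γ] [LinearOrder Γ] [IsOrderedAddMonoid Γ] {Δ : Type*} [AddCommGroup Δ] [LinearOrder Δ] [IsOrderedAddMonoid Δ]
  {v : R → WithTop Γ} {w : S → WithTop Δ} {ι : R →+* S}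

/-- Key comparison lemma: under conditions (ii)/(iii), `w ∘ ι` is finite and
monotone on elements where `v` is finite. -/
theorem keyA (hv : IsValuation v) (hw : IsValuation w)
    (hsub : valRing v ⊆ ι ⁻¹' valRing w)
    (hid : valIdeal v = valRing v ∩ ι ⁻¹' valIdeal w)
    {x y : R} {γ : Γ} (hx : v x = γ) (hxy : v x ≤ v y) :
    w (ι x) ≠ ⊤ ∧ w (ι x) ≤ w (ι y) := by
  obtain ⟨z, hz⟩ := hv.surjective ((-γ : Γ) : WithTop Γ)
  have hxz : v (x * z) = 0 := by
    rw [hv.map_mul, hx, hz, ← WithTop.coe_add, add_neg_cancel, WithTop.coe_zero]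
  have h1 : x * z ∈ valRing v := le_of_eq hxz.symm
  have h2 : x * z ∉ valIdeal v := by simp [valIdeal, hxz]
  have h3 : (0 : WithTop Δ) ≤ w (ι (x * z)) := hsub h1
  have h4 : ¬ (0 : WithTop Δ) < w (ι (x * z)) := fun hc => h2 (hid ▸ ⟨h1, hc⟩)
  have h5 : w (ι x) + w (ι z) = 0 := by
    rw [← hw.map_mul, ← map_mul]; exact le_antisymm (not_lt.mp h4) h3
  have hxt : w (ι x) ≠ ⊤ := by
    intro hc; rw [hc, top_add] at h5; exact absurd h5 (by simp)
  have hzt : w (ι z) ≠ ⊤ := by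
    intro hc; rw [hc, add_top] at h5; exact absurd h5 (by simp)
  refine ⟨hxt, ?_⟩
  have h6 : (0 : WithTop Γ) ≤ v (y * z) := by
    rw [hv.map_mul, ← hxz, hv.map_mul]
    exact add_le_add_left hxy _
  have h7 : w (ι x) + w (ι z) ≤ w (ι y) + w (ι z) := by
    rw [h5, ← hw.map_mul, ← map_mul]; exact hsub h6
  exact (WithTop.add_le_add_iff_right hzt).mp h7

/-- Condition (ii) implies the support condition of (iii). -/
theorem iiToSupp (hv : IsValuation v) (hw : IsValuation w)
    (hid : valIdeal v = valRing v ∩ ι ⁻¹' valIdeal w)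
    (H : AddSubgroup Δ) (hH : ∀ γ : Δ, γ ∈ H ↔ ∃ x : R, w (ι x) = (γ : WithTop Δ)) :
    valSupp v ⊆ ι ⁻¹' valSupp w := by
  intro x hx
  by_contra hc
  obtain ⟨γ, hγ⟩ : ∃ γ : Δ, w (ι x) = γ := Option.ne_none_iff_exists'.mp hc
  obtain ⟨y, hy⟩ := (hH (-γ)).mp (neg_mem ((hH γ).mpr ⟨x, hγ⟩))
  have hvxy : x * y ∈ valIdeal v := by
    show (0 : WithTop Γ) < v (x * y)
    rw [hv.map_mul, hx, top_add]
    exact WithTop.coe_lt_top 0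
  have hlt := (hid ▸ hvxy).2
  have hwxy : w (ι (x * y)) = 0 := by
    rw [map_mul, hw.map_mul, hγ, hy, ← WithTop.coe_add, add_neg_cancel, WithTop.coe_zero]
  have hlt2 : (0 : WithTop Δ) < w (ι (x * y)) := hlt
  rw [hwxy] at hlt2
  exact lt_irrefl _ hlt2

/-- Condition (iii) implies (i): construction of the order-embedding `h`. -/
theorem mainConstr (hv : IsValuation v) (hw : IsValuation w)
    (hsub : valRing v ⊆ ι ⁻¹' valRing w)
    (hid : valIdeal v = valRing v ∩ ι ⁻¹' valIdeal w)
    (hsupp : valSupp v ⊆ ι ⁻¹' valSupp w) :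
    ∃ h : Γ →+ Δ, (∀ a b : Γ, a ≤ b ↔ h a ≤ h b) ∧
      ∀ x : R, w (ι x) = WithTop.map (⇑h) (v x) := by
  choose g hg using hv.surjective
  have hgc : ∀ γ : Γ, v (g (γ : WithTop Γ)) = (γ : WithTop Γ) := fun γ => hg _
  set h0 : Γ → Δ := fun γ => (w (ι (g (γ : WithTop Γ)))).untopD 0 with hh0
  have hspec : ∀ (x : R) (γ : Γ), v x = (γ : WithTop Γ) → w (ι x) = (h0 γ : WithTop Δ) := by
    intro x γ hx
    have e1 := keyA hv hw hsub hid hx (hx.trans (hgc γ).symm).le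
    have e2 := keyA hv hw hsub hid (hgc γ) ((hgc γ).trans hx.symm).le
    have heq : w (ι x) = w (ι (g (γ : WithTop Γ))) := le_antisymm e1.2 e2.2
    obtain ⟨b, hb⟩ : ∃ b : Δ, w (ι (g (γ : WithTop Γ))) = b :=
      Option.ne_none_iff_exists'.mp e2.1
    rw [heq, hb, hh0]; simp [hb]
  have hmapadd : ∀ a b : Γ, h0 (a + b) = h0 a + h0 b := by
    intro a b
    have hab : v (g (a : WithTop Γ) * g (b : WithTop Γ)) = ((a + b : Γ) : WithTop Γ) := by
      rw [hv.map_mul, hgc, hgc, WithTop.coe_add]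
    have e1 := hspec _ _ hab
    have e2 := hspec _ _ (hgc a)
    have e3 := hspec _ _ (hgc b)
    have key : (h0 (a + b) : WithTop Δ) = ((h0 a + h0 b : Δ) : WithTop Δ) := by
      rw [← e1, map_mul, hw.map_mul, e2, e3, WithTop.coe_add]
    exact_mod_cast key
  refine ⟨AddMonoidHom.mk' h0 hmapadd, ?_, ?_⟩
  · have hmono : ∀ a b : Γ, a ≤ b → h0 a ≤ h0 b := by
      intro a b hab
      have hxy : v (g (a : WithTop Γ)) ≤ v (g (b : WithTop Γ)) := by
        rw [hgc a, hgc b]; exact_mod_cast hab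
      have hle := (keyA hv hw hsub hid (hgc a) hxy).2
      rw [hspec _ _ (hgc a), hspec _ _ (hgc b)] at hle
      exact_mod_cast hle
    have hstrict : ∀ a b : Γ, a < b → h0 a < h0 b := by
      intro a b hab
      have hmem : g ((b - a : Γ) : WithTop Γ) ∈ valIdeal v := by
        show (0 : WithTop Γ) < v (g ((b - a : Γ) : WithTop Γ))
        rw [hgc]; exact_mod_cast sub_pos.mpr hab
      have hlt := (hid ▸ hmem).2
      have hval : w (ι (g ((b - a : Γ) : WithTop Γ))) = (h0 (b - a) : WithTop Δ) :=
        hspec _ _ (hgc _)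
      have hpos' : (0 : Δ) < h0 (b - a) := by
        have hlt2 : (0 : WithTop Δ) < (h0 (b - a) : WithTop Δ) := hval ▸ hlt
        exact_mod_cast hlt2
      have hsplit : h0 b = h0 (b - a) + h0 a := by
        rw [← hmapadd]; congr 1; abel
      rw [hsplit]
      calc h0 a = 0 + h0 a := (zero_add _).symm
        _ < h0 (b - a) + h0 a := add_lt_add_left hpos' _
    intro a b
    exact ⟨hmono a b, fun hle => by
      by_contra hc
      exact absurd (hstrict b a (not_le.mp hc)) (not_lt.mpr hle)⟩
  · intro x
    rcases eq_or_ne (v x) ⊤ with ht | ht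
    · rw [ht, WithTop.map_top]
      exact hsupp ht
    · obtain ⟨γ, hγ⟩ : ∃ γ : Γ, v x = γ := Option.ne_none_iff_exists'.mp ht
      rw [hγ, WithTop.map_coe, hspec x γ hγ]
      rfl

/-- Condition (i) implies the inclusion/prime conditions, the support condition,
and the subgroup condition. -/
theorem fwd (hv : IsValuation v) (hw : IsValuation w)
    (h : Γ →+ Δ) (hord : ∀ a b : Γ, a ≤ b ↔ h a ≤ h b)
    (hcomp : ∀ x : R, w (ι x) = WithTop.map (⇑h) (v x)) :
    valRing v ⊆ ι ⁻¹' valRing w ∧ valIdeal v = valRing v ∩ ι ⁻¹' valIdeal w ∧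
      valSupp v ⊆ ι ⁻¹' valSupp w ∧
      (∀ γ : Δ, γ ∈ h.range ↔ ∃ x : R, w (ι x) = (γ : WithTop Δ)) := by
  have hpos : ∀ a : Γ, 0 ≤ a → (0 : Δ) ≤ h a := by
    intro a ha
    have := (hord 0 a).mp ha
    rwa [map_zero] at this
  have hposs : ∀ a : Γ, 0 < a → (0 : Δ) < h a := by
    intro a ha
    rcases lt_or_eq_of_le (hpos a ha.le) with hlt | heq
    · exact hlt
    · exact absurd ((hord a 0).mpr (by rw [map_zero, ← heq])) (not_le.mpr ha)
  refine ⟨?_, ?_, ?_, ?_⟩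
  · intro x hx
    show (0 : WithTop Δ) ≤ w (ι x)
    rw [hcomp]
    rcases eq_or_ne (v x) ⊤ with ht | ht
    · rw [ht]; exact le_top
    · obtain ⟨a, ha⟩ : ∃ a : Γ, v x = a := Option.ne_none_iff_exists'.mp ht
      rw [ha, WithTop.map_coe]
      have h0a : (0 : Γ) ≤ a := by
        have h0a' : (0 : WithTop Γ) ≤ (a : WithTop Γ) := ha ▸ hx
        exact_mod_cast h0a'
      exact_mod_cast hpos a h0a
  · ext x
    simp only [valIdeal, valRing, Set.mem_setOf_eq, Set.mem_inter_iff, Set.mem_preimage]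
    rw [hcomp]
    rcases eq_or_ne (v x) ⊤ with ht | ht
    · rw [ht]
      simp only [WithTop.map_top]
      constructor
      · intro _; exact ⟨le_top, WithTop.coe_lt_top 0⟩
      · intro _; exact WithTop.coe_lt_top 0
    · obtain ⟨a, ha⟩ : ∃ a : Γ, v x = a := Option.ne_none_iff_exists'.mp ht
      rw [ha, WithTop.map_coe]
      constructor
      · intro hlt
        have h0a : (0 : Γ) < a := by exact_mod_cast hlt
        exact ⟨by exact_mod_cast h0a.le, by exact_mod_cast hposs a h0a⟩
      · rintro ⟨hle, hlt⟩
        have h0a : (0 : Γ) ≤ a := by exact_mod_cast hle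
        have hha : (0 : Δ) < h a := by exact_mod_cast hlt
        rcases lt_or_eq_of_le h0a with h' | h'
        · exact_mod_cast h'
        · rw [← h', map_zero] at hha
          exact absurd hha (lt_irrefl _)
  · intro x hx
    show w (ι x) = ⊤
    rw [hcomp, hx, WithTop.map_top]
  · intro γ
    constructor
    · rintro ⟨a, rfl⟩
      obtain ⟨x, hx⟩ := hv.surjective (a : WithTop Γ)
      exact ⟨x, by rw [hcomp, hx, WithTop.map_coe]⟩
    · rintro ⟨x, hx⟩
      rw [hcomp] at hx
      rcases eq_or_ne (v x) ⊤ with ht | ht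
      · rw [ht, WithTop.map_top] at hx
        exact absurd hx (by simp)
      · obtain ⟨a, ha⟩ : ∃ a : Γ, v x = a := Option.ne_none_iff_exists'.mp ht
        rw [ha, WithTop.map_coe] at hx
        exact ⟨a, by exact_mod_cast hx⟩

end Aux

/-- Equivalent characterizations of `w` being an extension of `v` along a
subsuperring inclusion `ι : R → S`: (i) `w ∘ ι = h ∘ v` for an order isomorphism
`h` onto an ordered subgroup; (ii) `(A_v, 𝔭_v) ≼ (A_w, 𝔭_w)` and `w` restricts to
a valuation on `R` (its image minus `∞` is a subgroup); (iii) `(A_v, 𝔭_v) ≼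
(A_w, 𝔭_w)` and `supp v ⊆ supp w`. -/
theorem extension_iff_conditions {R S : Type u} [Ring R] [Ring S]
    [Nontrivial R] [Nontrivial S]
    (𝒜 : ZMod 2 → AddSubgroup R) (ℬ : ZMod 2 → AddSubgroup S)
    (hR : IsSuperring 𝒜) (hS : IsSuperring ℬ)
    (ι : R →+* S) (hinj : Function.Injective ι)
    (hgrade : ∀ (i : ZMod 2) (x : R), x ∈ 𝒜 i ↔ ι x ∈ ℬ i)
    {Γ : Type*} [AddCommGroup Γ] [LinearOrder Γ] [IsOrderedAddMonoid Γ] {Δ : Type*} [AddCommGroup Δ] [LinearOrder Δ] [IsOrderedAddMonoid Δ]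
    (v : R → WithTop Γ) (hv : IsValuation v)
    (w : S → WithTop Δ) (hw : IsValuation w) :
    ((∃ h : Γ →+ Δ, (∀ a b : Γ, a ≤ b ↔ h a ≤ h b) ∧
        ∀ x : R, w (ι x) = WithTop.map (⇑h) (v x)) ↔
      (valRing v ⊆ ι ⁻¹' valRing w ∧ valIdeal v = valRing v ∩ ι ⁻¹' valIdeal w ∧
        ∃ H : AddSubgroup Δ, ∀ γ : Δ, γ ∈ H ↔ ∃ x : R, w (ι x) = (γ : WithTop Δ))) ∧
    ((∃ h : Γ →+ Δ, (∀ a b : Γ, a ≤ b ↔ h a ≤ h b) ∧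
        ∀ x : R, w (ι x) = WithTop.map (⇑h) (v x)) ↔
      (valRing v ⊆ ι ⁻¹' valRing w ∧ valIdeal v = valRing v ∩ ι ⁻¹' valIdeal w ∧
        valSupp v ⊆ ι ⁻¹' valSupp w)) := by
  constructor
  · constructor
    · rintro ⟨h, hord, hcomp⟩
      obtain ⟨h1, h2, _, h4⟩ := fwd hv hw h hord hcomp
      exact ⟨h1, h2, h.range, h4⟩
    · rintro ⟨h1, h2, H, hH⟩
      exact mainConstr hv hw h1 h2 (iiToSupp hv hw h2 H hH)
  · constructor
    · rintro ⟨h, hord, hcomp⟩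
      obtain ⟨h1, h2, h3, _⟩ := fwd hv hw h hord hcomp
      exact ⟨h1, h2, h3⟩
    · rintro ⟨h1, h2, h3⟩
      exact mainConstr hv hw h1 h2 h3
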